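/- Let N > 2 be an even integer and α ∈ ℂ. Assume ∫ e^{c|y|} |g(y)| dν(y) < ∞ for every c > 0, and let t ∈ ℝ be such that ∫ |exp(i^N α t y^N / N!)| |g(y)| dν(y) < ∞. If the function f(x) = ∫ e^{ixy} g(y) dν(y) is odd on ℝ (f(−x) = −f(x) for all x ∈ ℝ), then the solution at time t, u(t,x) := ∫ e^{ixy} exp(i^N α t y^N / N!) g(y) dν(y), is also odd: u(t,−x) = −u(t,x) for all x ∈ ℝ; in particular u(t,0) = 0, so the Dirichlet boundary condition at the origin is preserved in time. -/

import Mathlib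

open Complex Real Filter MeasureTheory FourierTransform
open scoped ContDiff

/-- Auxiliary: a smooth compactly supported function is a Schwartz function. -/
lemma odd_aux_exists_schwartz (f : ℝ → ℂ) (hf : ContDiff ℝ ∞ f) (h : HasCompactSupport f) :
    ∃ ψ : SchwartzMap ℝ ℂ, ⇑ψ = f := by
  refine ⟨⟨f, hf, fun k n => ?_⟩, rfl⟩
  have hc : Continuous fun x : ℝ => ‖x‖ ^ k * ‖iteratedFDeriv ℝ n f x‖ :=
    ((continuous_norm).pow k).mul ((hf.continuous_iteratedFDeriv (mod_cast le_top)).norm)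
  have hcs : HasCompactSupport fun x : ℝ => ‖x‖ ^ k * ‖iteratedFDeriv ℝ n f x‖ :=
    ((h.iteratedFDeriv n).norm).mul_left
  obtain ⟨C, hC⟩ := hcs.exists_bound_of_continuous hc
  exact ⟨C, fun x => le_trans (le_abs_self _) (hC x)⟩

lemma odd_aux_norm_exp_I_mul (a b : ℝ) : ‖Complex.exp (Complex.I * a * b)‖ = 1 := by
  have h : Complex.I * a * b = (a * b : ℝ) * Complex.I := by push_cast; ring
  rw [h, Complex.norm_exp_ofReal_mul_I]

lemma odd_aux_exp_int (ν : Measure ℝ) [IsFiniteMeasure ν] (g : ℝ → ℂ) (hg : Integrable g ν)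
    (a : ℝ) : Integrable (fun y : ℝ => Complex.exp (Complex.I * a * y) * g y) ν :=
  hg.bdd_mul ((Complex.continuous_exp.comp (by continuity)).aestronglyMeasurable)
    (c := 1) (Filter.Eventually.of_forall fun y => le_of_eq (odd_aux_norm_exp_I_mul a y))

/-- Key step: integrating an even Schwartz multiplier against an odd-Fourier-transform
complex measure `g dν` gives zero when paired with `e^{-ixy} + e^{ixy}`. -/
lemma odd_aux_key (ν : Measure ℝ) [IsFiniteMeasure ν] (g : ℝ → ℂ) (hg : Integrable g ν)
    (hodd : ∀ x : ℝ,
      (∫ y : ℝ, Complex.exp (Complex.I * (-x : ℝ) * y) * g y ∂ν)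
        = -∫ y : ℝ, Complex.exp (Complex.I * x * y) * g y ∂ν)
    (ψ : SchwartzMap ℝ ℂ) (hψ : ∀ y : ℝ, ψ (-y) = ψ y) (x : ℝ) :
    ∫ y : ℝ, (Complex.exp (Complex.I * (-x : ℝ) * y) + Complex.exp (Complex.I * x * y))
      * ψ y * g y ∂ν = 0 := by
  set fh : ℝ → ℂ := fun a : ℝ => ∫ y : ℝ, Complex.exp (Complex.I * a * y) * g y ∂ν with hfh
  have hodd' : ∀ a : ℝ, fh (-a) = - fh a := fun a => hodd a
  set A : ℝ → ℂ := fun y : ℝ =>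
    Complex.exp (Complex.I * (-x : ℝ) * y) + Complex.exp (Complex.I * x * y) with hA
  have hAcont : Continuous A := by
    apply Continuous.add
    · exact Complex.continuous_exp.comp (by continuity)
    · exact Complex.continuous_exp.comp (by continuity)
  have hAle : ∀ y : ℝ, ‖A y‖ ≤ 2 := by
    intro y
    calc ‖A y‖ ≤ ‖Complex.exp (Complex.I * (-x : ℝ) * y)‖ + ‖Complex.exp (Complex.I * x * y)‖ :=
          norm_add_le _ _
    _ = 2 := by rw [odd_aux_norm_exp_I_mul, odd_aux_norm_exp_I_mul]; norm_num
  set K : ℝ → ℂ := 𝓕 ⇑ψ with hK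
  have hKint : Integrable K volume := by
    have h1 := (SchwartzMap.fourierTransformCLM ℂ ψ).integrable (μ := volume)
    exact h1
  have hKcont : Continuous K := by
    have h1 := (SchwartzMap.fourierTransformCLM ℂ ψ).continuous
    exact h1
  have hKeven : ∀ ξ : ℝ, K (-ξ) = K ξ := by
    intro ξ
    have h1 : 𝓕⁻ (⇑ψ) ξ = 𝓕 (⇑ψ) (-ξ) := Real.fourierInv_eq_fourier_neg _ _
    have h2 : 𝓕⁻ (⇑ψ) = 𝓕 (fun y : ℝ => ψ (-y)) :=
      Real.fourierInv_eq_fourier_comp_neg _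
    have h3 : (fun y : ℝ => ψ (-y)) = ⇑ψ := funext hψ
    rw [hK, ← h1, h2, h3]
  have hinv : ∀ y : ℝ,
      (ψ y : ℂ) = ∫ ξ : ℝ, Complex.exp ((2 * π * (ξ * y) : ℝ) * Complex.I) * K ξ := by
    intro y
    have h1 : 𝓕⁻ (𝓕 ⇑ψ) = ⇑ψ :=
      Continuous.fourierInv_fourier_eq ψ.continuous ψ.integrable (by simpa [hK] using hKint)
    have h2 : (ψ y : ℂ) = 𝓕⁻ K y := by rw [hK, h1]
    rw [h2, Real.fourierInv_eq']
    simp only [smul_eq_mul]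
    refine integral_congr_ae (Filter.Eventually.of_forall fun v => ?_)
    simp only [RCLike.inner_apply, conj_trivial]
    ring_nf
  have hswap_int : Integrable (Function.uncurry fun y ξ : ℝ =>
      (A y * g y) * (Complex.exp ((2 * π * (ξ * y) : ℝ) * Complex.I) * K ξ)) (ν.prod volume) := by
    have hb : Integrable (fun p : ℝ × ℝ => (2 * ‖g p.1‖) * ‖K p.2‖) (ν.prod volume) :=
      (hg.norm.const_mul 2).mul_prod hKint.norm
    refine hb.mono' ?_ ?_
    · have m1 : AEStronglyMeasurable (fun p : ℝ × ℝ => A p.1 * g p.1) (ν.prod volume) :=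
        (hAcont.aestronglyMeasurable.mul hg.1).comp_fst
      have m2 : Continuous fun p : ℝ × ℝ =>
          Complex.exp ((2 * π * (p.2 * p.1) : ℝ) * Complex.I) * K p.2 := by
        apply Continuous.mul
        · exact Complex.continuous_exp.comp (by continuity)
        · exact hKcont.comp continuous_snd
      exact m1.mul m2.aestronglyMeasurable
    · filter_upwards with p
      simp only [Function.uncurry]
      rw [norm_mul, norm_mul, norm_mul]
      have he : ‖Complex.exp ((2 * π * (p.2 * p.1) : ℝ) * Complex.I)‖ = 1 := by
        rw [Complex.norm_exp_ofReal_mul_I]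
      rw [he, one_mul]
      gcongr
      exact hAle p.1
  have hstep : (∫ y : ℝ, A y * ψ y * g y ∂ν)
      = ∫ ξ : ℝ, (fh (-x + 2 * π * ξ) + fh (x + 2 * π * ξ)) * K ξ := by
    have e0 : ∀ y : ℝ, A y * ψ y * g y
        = ∫ ξ : ℝ, (A y * g y) * (Complex.exp ((2 * π * (ξ * y) : ℝ) * Complex.I) * K ξ) := by
      intro y
      rw [show A y * ψ y * g y = (A y * g y) * (ψ y) from by ring, hinv y, ← integral_const_mul]
    rw [integral_congr_ae (Filter.Eventually.of_forall e0), integral_integral_swap hswap_int]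
    refine integral_congr_ae (Filter.Eventually.of_forall fun ξ => ?_)
    beta_reduce
    have e1 : ∀ y : ℝ, (A y * g y) * (Complex.exp ((2 * π * (ξ * y) : ℝ) * Complex.I) * K ξ)
        = (Complex.exp (Complex.I * (-x + 2 * π * ξ : ℝ) * y) * g y
           + Complex.exp (Complex.I * (x + 2 * π * ξ : ℝ) * y) * g y) * K ξ := by
      intro y
      have q1 : Complex.exp (Complex.I * (-x : ℝ) * y)
            * Complex.exp ((2 * π * (ξ * y) : ℝ) * Complex.I)
          = Complex.exp (Complex.I * (-x + 2 * π * ξ : ℝ) * y) := by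
        rw [← Complex.exp_add]; congr 1; push_cast; ring
      have q2 : Complex.exp (Complex.I * (x : ℝ) * y)
            * Complex.exp ((2 * π * (ξ * y) : ℝ) * Complex.I)
          = Complex.exp (Complex.I * (x + 2 * π * ξ : ℝ) * y) := by
        rw [← Complex.exp_add]; congr 1; push_cast; ring
      calc (A y * g y) * (Complex.exp ((2 * π * (ξ * y) : ℝ) * Complex.I) * K ξ)
          = (Complex.exp (Complex.I * (-x : ℝ) * y)
              * Complex.exp ((2 * π * (ξ * y) : ℝ) * Complex.I) * g y
             + Complex.exp (Complex.I * (x : ℝ) * y)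
              * Complex.exp ((2 * π * (ξ * y) : ℝ) * Complex.I) * g y) * K ξ := by
            rw [hA]; ring
      _ = _ := by rw [q1, q2]
    rw [integral_congr_ae (Filter.Eventually.of_forall e1), integral_mul_const,
      integral_add (odd_aux_exp_int ν g hg _) (odd_aux_exp_int ν g hg _)]
  rw [hstep]
  have hH : ∀ ξ : ℝ, (fh (-x + 2 * π * -ξ) + fh (x + 2 * π * -ξ)) * K (-ξ)
      = -((fh (-x + 2 * π * ξ) + fh (x + 2 * π * ξ)) * K ξ) := by
    intro ξ
    have a1 : (-x + 2 * π * -ξ : ℝ) = -(x + 2 * π * ξ) := by ring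
    have a2 : (x + 2 * π * -ξ : ℝ) = -(-x + 2 * π * ξ) := by ring
    rw [a1, a2, hodd' (x + 2 * π * ξ), hodd' (-x + 2 * π * ξ), hKeven]; ring
  have h0 : (∫ ξ : ℝ, (fh (-x + 2 * π * ξ) + fh (x + 2 * π * ξ)) * K ξ)
      = - ∫ ξ : ℝ, (fh (-x + 2 * π * ξ) + fh (x + 2 * π * ξ)) * K ξ := by
    conv_lhs => rw [← integral_neg_eq_self
      (fun ξ : ℝ => (fh (-x + 2 * π * ξ) + fh (x + 2 * π * ξ)) * K ξ) volume]
    simp only [hH]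
    rw [integral_neg]
  linear_combination h0 / 2

/-- for N > 2 even, if the initial datum f(x) = ∫ e^{ixy} g(y) dν(y) is odd
on ℝ, then so is the solution at time t, u(t,x) = ∫ e^{ixy} exp(i^N α t y^N/N!) g(y) dν(y):
u(t,−x) = −u(t,x) for all x; in particular u(t,0) = 0, so the Dirichlet boundary condition
at the origin is preserved in time. -/
theorem odd_datum_preserved (N : ℕ) (hN : 2 < N) (hNe : Even N) (α : ℂ)
    (ν : Measure ℝ) [IsFiniteMeasure ν] (g : ℝ → ℂ) (hg : Integrable g ν)
    (h1 : ∀ c : ℝ, 0 < c →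
      Integrable (fun y : ℝ => Real.exp (c * |y|) * ‖g y‖) ν)
    (t : ℝ)
    (ht : Integrable (fun y : ℝ =>
      ‖Complex.exp (Complex.I ^ N * α * (t : ℂ) * (y : ℂ) ^ N /
        (Nat.factorial N : ℂ))‖ * ‖g y‖) ν)
    (hodd : ∀ x : ℝ,
      (∫ y : ℝ, Complex.exp (Complex.I * (-x : ℝ) * y) * g y ∂ν)
        = -∫ y : ℝ, Complex.exp (Complex.I * x * y) * g y ∂ν) :
    (∀ x : ℝ,
      (∫ y : ℝ, Complex.exp (Complex.I * (-x : ℝ) * y) *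
          Complex.exp (Complex.I ^ N * α * (t : ℂ) * (y : ℂ) ^ N / (Nat.factorial N : ℂ)) *
          g y ∂ν)
        = -∫ y : ℝ, Complex.exp (Complex.I * x * y) *
            Complex.exp (Complex.I ^ N * α * (t : ℂ) * (y : ℂ) ^ N / (Nat.factorial N : ℂ)) *
            g y ∂ν)
    ∧ (∫ y : ℝ, Complex.exp (Complex.I * (0 : ℝ) * y) *
          Complex.exp (Complex.I ^ N * α * (t : ℂ) * (y : ℂ) ^ N / (Nat.factorial N : ℂ)) *
          g y ∂ν) = 0 := by
  set m : ℝ → ℂ := fun y : ℝ =>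
    Complex.exp (Complex.I ^ N * α * (t : ℂ) * (y : ℂ) ^ N / (Nat.factorial N : ℂ)) with hm
  have hm_smooth : ContDiff ℝ ∞ m := by
    apply Complex.contDiff_exp.comp
    exact (contDiff_const.mul ((Complex.ofRealCLM.contDiff).pow N)).div_const _
  have hm_cont : Continuous m := hm_smooth.continuous
  have hm_even : ∀ y : ℝ, m (-y) = m y := by
    intro y
    rw [hm]
    simp only
    rw [show (((-y : ℝ) : ℂ)) = -(y : ℂ) from by push_cast; ring, hNe.neg_pow]
  have htm : Integrable (fun y : ℝ => ‖m y‖ * ‖g y‖) ν := ht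
  have hint : ∀ a : ℝ,
      Integrable (fun y : ℝ => Complex.exp (Complex.I * a * y) * m y * g y) ν := by
    intro a
    have hmeas : AEStronglyMeasurable (fun y : ℝ => Complex.exp (Complex.I * a * y) * m y) ν :=
      ((Complex.continuous_exp.comp (by continuity)).mul hm_cont).aestronglyMeasurable
    refine htm.mono' (hmeas.mul hg.1) ?_
    filter_upwards with y
    rw [norm_mul, norm_mul, odd_aux_norm_exp_I_mul, one_mul]
  let b : ContDiffBump (0 : ℝ) := ⟨1, 2, one_pos, one_lt_two⟩
  have part1 : ∀ x : ℝ,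
      (∫ y : ℝ, Complex.exp (Complex.I * (-x : ℝ) * y) * m y * g y ∂ν)
        = -∫ y : ℝ, Complex.exp (Complex.I * x * y) * m y * g y ∂ν := by
    intro x
    set A : ℝ → ℂ := fun y : ℝ =>
      Complex.exp (Complex.I * (-x : ℝ) * y) + Complex.exp (Complex.I * x * y) with hA
    have hAle : ∀ y : ℝ, ‖A y‖ ≤ 2 := by
      intro y
      calc ‖A y‖ ≤ ‖Complex.exp (Complex.I * (-x : ℝ) * y)‖
            + ‖Complex.exp (Complex.I * x * y)‖ := norm_add_le _ _
      _ = 2 := by rw [odd_aux_norm_exp_I_mul, odd_aux_norm_exp_I_mul]; norm_num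
    -- the approximating integrals vanish
    have keyn : ∀ n : ℕ,
        (∫ y : ℝ, A y * (m y * ((b (y / ((n : ℝ) + 1)) : ℝ) : ℂ)) * g y ∂ν) = 0 := by
      intro n
      have hne : ((n : ℝ) + 1) ≠ 0 := by positivity
      have hsm : ContDiff ℝ ∞ fun y : ℝ => m y * ((b (y / ((n : ℝ) + 1)) : ℝ) : ℂ) := by
        apply hm_smooth.mul
        exact Complex.ofRealCLM.contDiff.comp (b.contDiff.comp (contDiff_id.div_const _))
      have hcs1 : HasCompactSupport fun y : ℝ => b (y / ((n : ℝ) + 1)) := by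
        have := b.hasCompactSupport.comp_homeomorph (Homeomorph.mulRight₀ (((n : ℝ) + 1)⁻¹)
          (by positivity))
        simpa [Function.comp_def, div_eq_mul_inv] using this
      have hcs2 : HasCompactSupport fun y : ℝ => ((b (y / ((n : ℝ) + 1)) : ℝ) : ℂ) :=
        hcs1.comp_left (g := fun r : ℝ => (r : ℂ)) (by simp)
      have hcs : HasCompactSupport fun y : ℝ => m y * ((b (y / ((n : ℝ) + 1)) : ℝ) : ℂ) :=
        hcs2.mul_left
      obtain ⟨Ψ, hΨ⟩ := odd_aux_exists_schwartz _ hsm hcs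
      have hΨeven : ∀ y : ℝ, Ψ (-y) = Ψ y := by
        intro y
        have : (-y) / ((n : ℝ) + 1) = -(y / ((n : ℝ) + 1)) := by ring
        simp only [hΨ, this, b.neg, hm_even]
      have := odd_aux_key ν g hg hodd Ψ hΨeven x
      simpa only [hΨ, hA] using this
    -- dominated convergence
    have hDC : Tendsto (fun n : ℕ =>
          ∫ y : ℝ, A y * (m y * ((b (y / ((n : ℝ) + 1)) : ℝ) : ℂ)) * g y ∂ν) atTop
        (nhds (∫ y : ℝ, A y * m y * g y ∂ν)) := by
      apply tendsto_integral_of_dominated_convergence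
        (fun y : ℝ => 2 * (‖m y‖ * ‖g y‖))
      · intro n
        have hc : Continuous fun y : ℝ => A y * (m y * ((b (y / ((n : ℝ) + 1)) : ℝ) : ℂ)) := by
          apply Continuous.mul
          · rw [hA]
            exact (Complex.continuous_exp.comp (by continuity)).add
              (Complex.continuous_exp.comp (by continuity))
          · exact hm_cont.mul (Complex.continuous_ofReal.comp
              (b.continuous.comp (by continuity)))
        exact hc.aestronglyMeasurable.mul hg.1
      · exact htm.const_mul 2
      · intro n
        filter_upwards with y
        rw [norm_mul, norm_mul, norm_mul]
        have hb1 : ‖((b (y / ((n : ℝ) + 1)) : ℝ) : ℂ)‖ ≤ 1 := by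
          rw [Complex.norm_real, Real.norm_eq_abs, _root_.abs_of_nonneg b.nonneg]
          exact b.le_one
        calc ‖A y‖ * (‖m y‖ * ‖((b (y / ((n : ℝ) + 1)) : ℝ) : ℂ)‖) * ‖g y‖
            ≤ 2 * (‖m y‖ * 1) * ‖g y‖ := by
              have h2 := hAle y
              gcongr <;> assumption
        _ = 2 * (‖m y‖ * ‖g y‖) := by
              rw [mul_one]; ring
      · filter_upwards with y
        have hb0 : Tendsto (fun n : ℕ => y / ((n : ℝ) + 1)) atTop (nhds 0) := by
          have h2 := tendsto_one_div_add_atTop_nhds_zero_nat.const_mul y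
          simpa [mul_one_div, div_eq_mul_inv] using h2
        have hb1 : Tendsto (fun n : ℕ => ((b (y / ((n : ℝ) + 1)) : ℝ) : ℂ)) atTop (nhds 1) := by
          have h2 : Tendsto (fun n : ℕ => b (y / ((n : ℝ) + 1))) atTop (nhds (b 0)) :=
            (b.continuous.tendsto 0).comp hb0
          have h3 : b 0 = 1 := b.one_of_mem_closedBall (by
            simp only [Metric.mem_closedBall, dist_self]
            norm_num)
          rw [h3] at h2
          exact (Complex.continuous_ofReal.tendsto 1).comp h2
        have h4 : Tendsto (fun n : ℕ => A y * (m y * ((b (y / ((n : ℝ) + 1)) : ℝ) : ℂ)) * g y)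
            atTop (nhds (A y * (m y * 1) * g y)) :=
          (tendsto_const_nhds.mul (tendsto_const_nhds.mul hb1)).mul tendsto_const_nhds
        simpa using h4
    have hS : (∫ y : ℝ, A y * m y * g y ∂ν) = 0 := by
      have hz : Tendsto (fun n : ℕ =>
          ∫ y : ℝ, A y * (m y * ((b (y / ((n : ℝ) + 1)) : ℝ) : ℂ)) * g y ∂ν) atTop
          (nhds (0 : ℂ)) := by
        simp only [keyn]
        exact tendsto_const_nhds
      exact tendsto_nhds_unique hDC hz
    rw [eq_neg_iff_add_eq_zero, ← integral_add (hint (-x)) (hint x)]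
    rw [show (fun y : ℝ => Complex.exp (Complex.I * (-x : ℝ) * y) * m y * g y
        + Complex.exp (Complex.I * x * y) * m y * g y)
      = fun y : ℝ => A y * m y * g y from funext fun y => by rw [hA]; ring]
    exact hS
  refine ⟨part1, ?_⟩
  have h0 := part1 0
  rw [neg_zero] at h0
  linear_combination h0 / 2
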